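/- (No-Cycle Lemma) Let S be a sequence of pebbling moves on a graph G transforming a distribution D₀ into a distribution D. Then there exists a sequence S* of pebbling moves from D₀ reaching a distribution D* such that D*(v) ≥ D(v) for every vertex v, and the transition multidigraph T(G, S*) — whose vertex set is V(G) and which has one directed edge u→v for each move in S* taking two pebbles from u and placing one on v — contains no directed cycle. -/

import Mathlib

open SimpleGraph Finset

variable {V : Type*} [DecidableEq V]

/-- A valid sequence of pebbling moves: `ValidSeq G D S D'` means executing the
moves of `S` in order (each move `(u,v)` removes two pebbles from `u`, which must
hold at least two, and adds one on the adjacent vertex `v`) transforms `D` into `D'`. -/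
inductive ValidSeq (G : SimpleGraph V) : (V → ℕ) → List (V × V) → (V → ℕ) → Prop
  | nil (D : V → ℕ) : ValidSeq G D [] D
  | cons (D : V → ℕ) (u v : V) (huv : G.Adj u v) (h2 : 2 ≤ D u) {S : List (V × V)}
      {D' : V → ℕ}
      (h : ValidSeq G (fun x => if x = u then D u - 2 else if x = v then D v + 1 else D x)
        S D') :
      ValidSeq G D ((u, v) :: S) D'

/-- A generalized pebbling move among vertices of `A`, on integer-valued distributions. -/
def ZStepOn (G : SimpleGraph V) (A : Set V) (C C' : V → ℤ) : Prop :=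
  ∃ u v, u ∈ A ∧ v ∈ A ∧ G.Adj u v ∧ 2 ≤ C u ∧
    C' = fun x => if x = u then C u - 2 else if x = v then C v + 1 else C x

/-- A generalized distribution is `0`-solvable within `A` if pebbling moves inside `A`
reach a distribution nonnegative on `A`. -/
def ZSolvableOn (G : SimpleGraph V) (A : Set V) (C : V → ℤ) : Prop :=
  ∃ C', Relation.ReflTransGen (ZStepOn G A) C C' ∧ ∀ x ∈ A, 0 ≤ C' x

/-- Iterated leaf contraction: `Contract G s C s' C'` means the generalized
distribution `C` on the vertex set `s` can be contracted to `C'` on `s'` by repeatedly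
deleting a leaf `x` (a vertex with a unique neighbor `y` in the current set), replacing
`C y` by `C y + ⌊C x / 2⌋` if `C x ≥ 0` and by `C y + 2 C x` if `C x < 0`. -/
inductive Contract (G : SimpleGraph V) : Finset V → (V → ℤ) → Finset V → (V → ℤ) → Prop
  | refl (s : Finset V) (C : V → ℤ) : Contract G s C s C
  | step {s : Finset V} {C : V → ℤ} (x y : V) (hx : x ∈ s) (hy : y ∈ s)
      (hadj : G.Adj x y) (hleaf : ∀ z ∈ s, G.Adj x z → z = y)
      {s' : Finset V} {C' : V → ℤ}
      (h : Contract G (s.erase x)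
        (fun w => if w = y then C y + (if 0 ≤ C x then C x / 2 else 2 * C x) else C w)
        s' C') :
      Contract G s C s' C'

section NoCycleAuxSection

set_option linter.unusedSectionVars false

namespace NoCycleAux

/-- number of moves out of `v`. -/
def outc (m : List (V × V)) (v : V) : ℕ := m.countP (fun p => p.1 == v)

/-- number of moves into `v`. -/
def inc (m : List (V × V)) (v : V) : ℕ := m.countP (fun p => p.2 == v)

lemma outc_eq_count (m : List (V × V)) (v : V) : outc m v = (m.map Prod.fst).count v := by
  simp only [outc, List.count, List.countP_map]
  rfl

lemma inc_eq_count (m : List (V × V)) (v : V) : inc m v = (m.map Prod.snd).count v := by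
  simp only [inc, List.count, List.countP_map]
  rfl

lemma validSeq_balance {G : SimpleGraph V} {D₀ D : V → ℕ} {S : List (V × V)}
    (h : ValidSeq G D₀ S D) : ∀ v, D v + 2 * outc S v = D₀ v + inc S v := by
  induction h with
  | nil => simp [outc, inc]
  | cons D u v huv h2 h ih =>
    intro x
    have hne : u ≠ v := huv.ne
    have ihx := ih x
    simp only [outc, inc, List.countP_cons, beq_iff_eq] at *
    by_cases hx : x = u
    · subst hx
      simp [Ne.symm hne, hne] at ihx ⊢
      omega
    · by_cases hxv : x = v
      · subst hxv
        simp [Ne.symm hne, hne, hx] at ihx ⊢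
        omega
      · have h1 : u ≠ x := fun h => hx h.symm
        have h2 : v ≠ x := fun h => hxv h.symm
        simp [hx, hxv, h1, h2] at ihx ⊢
        omega

lemma validSeq_adj {G : SimpleGraph V} {D₀ D : V → ℕ} {S : List (V × V)}
    (h : ValidSeq G D₀ S D) : ∀ p ∈ S, G.Adj p.1 p.2 := by
  induction h with
  | nil => simp
  | cons D u v huv h2 h ih =>
    intro p hp
    rw [List.mem_cons] at hp
    rcases hp with rfl | hp
    · exact huv
    · exact ih _ hp




/-- A nonempty directed path of arcs, all belonging to `m`. -/
inductive ArcPath (m : List (V × V)) : V → V → List (V × V) → Prop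
  | single {a b : V} (h : (a, b) ∈ m) : ArcPath m a b [(a, b)]
  | cons {a b c : V} {E : List (V × V)} (h : (a, b) ∈ m) (hp : ArcPath m b c E) :
      ArcPath m a c ((a, b) :: E)

lemma ArcPath.ne_nil {m : List (V × V)} {a c : V} {E : List (V × V)}
    (h : ArcPath m a c E) : E ≠ [] := by cases h <;> simp

lemma ArcPath.subset {m : List (V × V)} {a c : V} {E : List (V × V)}
    (h : ArcPath m a c E) : ∀ p ∈ E, p ∈ m := by
  induction h with
  | single h => simpa using h
  | cons h hp ih =>
    intro p hp'
    rw [List.mem_cons] at hp'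
    rcases hp' with rfl | hp'
    · exact h
    · exact ih _ hp'

lemma ArcPath.src {m : List (V × V)} {a c : V} {E : List (V × V)}
    (h : ArcPath m a c E) (hl : 0 < E.length) : (E[0]'hl).1 = a := by
  cases h <;> rfl

lemma ArcPath.cons_fst {m : List (V × V)} {a c : V} {E : List (V × V)}
    (h : ArcPath m a c E) : ∃ t, E.map Prod.fst = a :: t := by
  cases h <;> exact ⟨_, rfl⟩

lemma ArcPath.snoc {m : List (V × V)} {a b c : V} {E : List (V × V)}
    (h : ArcPath m a b E) (hbc : (b, c) ∈ m) : ArcPath m a c (E ++ [(b, c)]) := by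
  induction h with
  | single h => exact .cons h (.single hbc)
  | cons h hp ih => exact .cons h (ih hbc)

lemma ArcPath.of_transGen {m : List (V × V)} {a b : V}
    (h : Relation.TransGen (fun x y => (x, y) ∈ m) a b) : ∃ E, ArcPath m a b E := by
  induction h with
  | single h => exact ⟨_, .single h⟩
  | tail h1 h2 ih => obtain ⟨E, hE⟩ := ih; exact ⟨_, hE.snoc h2⟩

lemma ArcPath.map_snd {m : List (V × V)} {a c : V} {E : List (V × V)}
    (h : ArcPath m a c E) : E.map Prod.snd = (E.map Prod.fst).tail ++ [c] := by
  induction h with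
  | single h => rfl
  | @cons a b c E h hp ih =>
    obtain ⟨t, ht⟩ := hp.cons_fst
    simp [ih, ht]

lemma ArcPath.drop {m : List (V × V)} {a c : V} {E : List (V × V)}
    (h : ArcPath m a c E) : ∀ k (hk : k < E.length), ArcPath m (E[k]'hk).1 c (E.drop k) := by
  induction h with
  | @single a b h =>
    intro k hk
    have hk0 : k = 0 := by simp at hk; omega
    subst hk0
    exact .single h
  | @cons a b c E h hp ih =>
    intro k hk
    match k with
    | 0 => exact .cons h hp
    | k + 1 =>
      simpa using ih k (by simpa using hk)

lemma ArcPath.take {m : List (V × V)} {a c : V} {E : List (V × V)}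
    (h : ArcPath m a c E) : ∀ k (hk : k < E.length), 0 < k →
      ArcPath m a ((E[k]'hk).1) (E.take k) := by
  induction h with
  | @single a b h => intro k hk h0; simp at hk; omega
  | @cons a b c E h hp ih =>
    intro k hk h0
    match k with
    | k + 1 =>
      rcases Nat.eq_zero_or_pos k with rfl | hkpos
      · have hlen : 0 < E.length := by
          cases hp <;> simp
        have : (E[0]'hlen).1 = b := hp.src hlen
        simpa [this] using ArcPath.single (m := m) h
      · have hk' : k < E.length := by simpa using hk
        simpa using (ih k hk' hkpos).cons (a := a) h

lemma simple_cycle (m : List (V × V)) :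
    ∀ (n : ℕ) (E : List (V × V)) (x : V), E.length ≤ n → ArcPath m x x E →
      ∃ (x' : V) (E' : List (V × V)), ArcPath m x' x' E' ∧ (E'.map Prod.fst).Nodup := by
  intro n
  induction n with
  | zero =>
    intro E x hlen hE
    exact absurd (List.length_eq_zero_iff.mp (Nat.le_zero.mp hlen)) hE.ne_nil
  | succ n ih =>
    intro E x hlen hE
    by_cases hnd : (E.map Prod.fst).Nodup
    · exact ⟨x, E, hE, hnd⟩
    · rw [List.nodup_iff_injective_get, Function.not_injective_iff] at hnd
      obtain ⟨i, j, hget, hne⟩ := hnd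
      have hgm : ∀ (k : Fin ((E.map Prod.fst).length)),
          (E.map Prod.fst).get k = (E[(k : ℕ)]'(by simpa using k.2)).1 := by
        intro k
        simp [List.get_eq_getElem]
      have key : ∃ a b, ∃ (ha : a < E.length) (hb : b < E.length), a < b ∧
          (E[a]'ha).1 = (E[b]'hb).1 := by
        have h1 := hgm i
        have h2 := hgm j
        have hij : (i : ℕ) ≠ (j : ℕ) := fun h => hne (Fin.ext h)
        rcases Nat.lt_or_ge (i : ℕ) (j : ℕ) with h | h
        · exact ⟨i, j, by simpa using i.2, by simpa using j.2, h, by rw [← h1, ← h2, hget]⟩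
        · exact ⟨j, i, by simpa using j.2, by simpa using i.2, by omega,
            by rw [← h1, ← h2, hget]⟩
      obtain ⟨a, b, ha, hb, hab, hfst⟩ := key
      have hdrop := hE.drop a ha
      have hk : b - a < (E.drop a).length := by
        simp only [List.length_drop]; omega
      have htake := hdrop.take (b - a) hk (by omega)
      have hidx : (((E.drop a)[b - a]'hk)).1 = (E[b]'hb).1 := by
        have : (E.drop a)[b - a]'hk = E[a + (b - a)]'(by omega) := List.getElem_drop ..
        rw [this]
        simp only [Nat.add_sub_cancel' (le_of_lt hab)]
      rw [hidx, ← hfst] at htake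
      refine ih ((E.drop a).take (b - a)) ((E[a]'ha).1) ?_ htake
      calc ((E.drop a).take (b - a)).length ≤ b - a := by
            rw [List.length_take]
            exact min_le_left _ _
        _ ≤ n := by
            have hba : b - a ≤ b := Nat.sub_le b a
            omega

lemma cycle_counts {m : List (V × V)} {x : V} {E : List (V × V)} (h : ArcPath m x x E)
    (hnd : (E.map Prod.fst).Nodup) :
    (∀ v, inc E v = outc E v) ∧ (∀ v, outc E v ≤ 1) ∧ E.Nodup := by
  have hsnd := h.map_snd
  obtain ⟨t, ht⟩ := h.cons_fst
  have hperm : (E.map Prod.snd).Perm (E.map Prod.fst) := by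
    rw [hsnd, ht]
    simpa using List.perm_append_singleton x t
  refine ⟨fun v => ?_, fun v => ?_, hnd.of_map Prod.fst⟩
  · rw [inc_eq_count, outc_eq_count]
    exact hperm.count_eq v
  · rw [outc_eq_count]
    exact List.nodup_iff_count_le_one.mp hnd v

lemma exists_descending_chain {α : Type*} (r : α → α → Prop) (P : α → Prop)
    (hstep : ∀ v, P v → ∃ z, r z v ∧ P z) (v0 : α) (h0 : P v0) :
    ∃ g : ℕ → α, (∀ n, P (g n)) ∧ ∀ n, r (g (n + 1)) (g n) := by
  choose f hf1 hf2 using hstep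
  let g : ℕ → {v // P v} := fun n =>
    Nat.rec (motive := fun _ => {v // P v}) ⟨v0, h0⟩ (fun _ p => ⟨f p.1 p.2, hf2 p.1 p.2⟩) n
  refine ⟨fun n => (g n).1, fun n => (g n).2, fun n => ?_⟩
  exact hf1 (g n).1 (g n).2

lemma exists_source (m : List (V × V)) (hne : m ≠ [])
    (hac : ∀ u, ¬ Relation.TransGen (fun a b => (a, b) ∈ m) u u) :
    ∃ u w, (u, w) ∈ m ∧ ∀ z, (z, u) ∉ m := by
  by_contra hcon
  push_neg at hcon
  have hstep : ∀ v : V, (∃ w, (v, w) ∈ m) → ∃ z, ((z, v) ∈ m) ∧ ∃ w', (z, w') ∈ m := by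
    rintro v ⟨w, hw⟩
    obtain ⟨z, hz⟩ := hcon v w hw
    exact ⟨z, hz, v, hz⟩
  have h0 : ∃ w, ((m.head hne).1, w) ∈ m := ⟨(m.head hne).2, by simpa using List.head_mem hne⟩
  obtain ⟨g, hgP, hgr⟩ := exists_descending_chain (fun z v => (z, v) ∈ m) _ hstep _ h0
  have htrans : ∀ i k, Relation.TransGen (fun a b => (a, b) ∈ m) (g (i + k + 1)) (g i) := by
    intro i k
    induction k with
    | zero => exact Relation.TransGen.single (hgr i)
    | succ k ihk => exact Relation.TransGen.head (hgr (i + k + 1)) ihk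
  have hmaps : ∀ n ∈ Finset.range ((m.map Prod.fst).toFinset.card + 1),
      g n ∈ (m.map Prod.fst).toFinset := by
    intro n _
    obtain ⟨w, hw⟩ := hgP n
    rw [List.mem_toFinset, List.mem_map]
    exact ⟨(g n, w), hw, rfl⟩
  obtain ⟨i, hi, j, hj, hij, heq⟩ :=
    Finset.exists_ne_map_eq_of_card_lt_of_maps_to (by simp) hmaps
  have key : ∀ i j : ℕ, i < j → g i = g j → False := by
    intro i j hlt he
    have h1 := htrans i (j - i - 1)
    have h2 : i + (j - i - 1) + 1 = j := by omega
    rw [h2, ← he] at h1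
    exact hac (g i) h1
  rcases Nat.lt_or_ge i j with h | h
  · exact key i j h heq
  · exact key j i (by omega) heq.symm

lemma order_lemma (G : SimpleGraph V) :
    ∀ (n : ℕ) (m : List (V × V)), m.length = n → (∀ p ∈ m, G.Adj p.1 p.2) →
      (∀ u, ¬ Relation.TransGen (fun a b => (a, b) ∈ m) u u) →
      ∀ D₀ Df : V → ℕ, (∀ v, Df v + 2 * outc m v = D₀ v + inc m v) →
      ∃ S', ValidSeq G D₀ S' Df ∧ ∀ p ∈ S', p ∈ m := by
  intro n
  induction n with
  | zero =>
    intro m hlen hadj hac D₀ Df hbal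
    obtain rfl : m = [] := List.length_eq_zero_iff.mp hlen
    have hDf : Df = D₀ := by
      funext v
      have := hbal v
      simp [outc, inc] at this
      omega
    subst hDf
    exact ⟨[], ValidSeq.nil Df, by simp⟩
  | succ n ih =>
    intro m hlen hadj hac D₀ Df hbal
    have hne : m ≠ [] := by
      intro h; rw [h] at hlen; simp at hlen
    obtain ⟨u, w, harc, hnoin⟩ := exists_source m hne hac
    have hadjuw : G.Adj u w := hadj (u, w) harc
    have hneuw : u ≠ w := hadjuw.ne
    obtain ⟨m', hperm⟩ : ∃ l, m.Perm ((u, w) :: l) := ⟨_, List.perm_cons_erase harc⟩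
    have hout : ∀ v, outc m v = outc m' v + (if u = v then 1 else 0) := by
      intro v
      rw [outc, hperm.countP_eq, List.countP_cons]
      simp only [outc]
      by_cases h : u = v <;> simp [h] <;> omega
    have hin : ∀ v, inc m v = inc m' v + (if w = v then 1 else 0) := by
      intro v
      rw [inc, hperm.countP_eq, List.countP_cons]
      simp only [inc]
      by_cases h : w = v <;> simp [h] <;> omega
    have hinu : inc m u = 0 := by
      rw [inc, List.countP_eq_zero]
      intro p hp
      simp only [beq_iff_eq]
      intro hp2
      exact hnoin p.1 (by rw [← hp2]; exact hp)
    have houtu : 1 ≤ outc m u := by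
      rw [outc]
      exact List.countP_pos_iff.mpr ⟨(u, w), harc, by simp⟩
    have h2 : 2 ≤ D₀ u := by
      have := hbal u
      omega
    have hsub' : ∀ p ∈ m', p ∈ m := fun p hp => (hperm.mem_iff.mpr (List.mem_cons_of_mem _ hp))
    have hiu : inc m' u = 0 := by
      have h := hin u
      rw [hinu] at h
      omega
    have hbal' : ∀ v, Df v + 2 * outc m' v =
        (fun x => if x = u then D₀ u - 2 else if x = w then D₀ w + 1 else D₀ x) v
          + inc m' v := by
      intro v
      beta_reduce
      have hb := hbal v
      have ho := hout v
      have hi := hin v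
      by_cases hv : v = u
      · subst hv
        rw [if_pos rfl] at ho
        rw [if_pos rfl]
        have hbu := hbal v
        omega
      · by_cases hv2 : v = w
        · subst hv2
          rw [if_neg hv, if_pos rfl]
          rw [if_neg hneuw] at ho
          rw [if_pos rfl] at hi
          omega
        · rw [if_neg hv, if_neg hv2]
          rw [if_neg (fun h => hv h.symm)] at ho
          rw [if_neg (fun h => hv2 h.symm)] at hi
          omega
    have hlen' : m'.length = n := by
      have := hperm.length_eq
      simp at this
      omega
    have hac' : ∀ u', ¬ Relation.TransGen (fun a b => (a, b) ∈ m') u' u' := by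
      intro u' h
      exact hac u' (Relation.TransGen.mono (fun a b hab => hsub' (a, b) hab) _ _ h)
    obtain ⟨S'', hval, hsubS⟩ := ih m' hlen' (fun p hp => hadj p (hsub' p hp)) hac' _ Df hbal'
    refine ⟨(u, w) :: S'', ValidSeq.cons D₀ u w hadjuw h2 hval, ?_⟩
    intro p hp
    rw [List.mem_cons] at hp
    rcases hp with rfl | hp
    · exact harc
    · exact hsub' p (hsubS p hp)

lemma decycle (G : SimpleGraph V) :
    ∀ (n : ℕ) (m : List (V × V)), m.length ≤ n → (∀ p ∈ m, G.Adj p.1 p.2) →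
      ∀ D₀ Df : V → ℕ, (∀ v, Df v + 2 * outc m v = D₀ v + inc m v) →
      ∃ S' D', ValidSeq G D₀ S' D' ∧ (∀ v, Df v ≤ D' v) ∧
        ∀ u, ¬ Relation.TransGen (fun a b => (a, b) ∈ S') u u := by
  intro n
  induction n with
  | zero =>
    intro m hlen hadj D₀ Df hbal
    obtain rfl : m = [] := List.length_eq_zero_iff.mp (Nat.le_zero.mp hlen)
    have hac : ∀ u, ¬ Relation.TransGen (fun a b => (a, b) ∈ ([] : List (V × V))) u u := by
      intro u h
      cases h with
      | single h => simp at h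
      | tail _ h => simp at h
    obtain ⟨S', hval, hsub⟩ := order_lemma G 0 [] rfl (by simp) hac D₀ Df hbal
    refine ⟨S', Df, hval, fun v => le_rfl, fun u h => ?_⟩
    exact hac u (Relation.TransGen.mono (fun a b hab => hsub (a, b) hab) _ _ h)
  | succ n ih =>
    intro m hlen hadj D₀ Df hbal
    by_cases hcyc : ∃ u, Relation.TransGen (fun a b => (a, b) ∈ m) u u
    · obtain ⟨u0, hu0⟩ := hcyc
      obtain ⟨E0, hE0⟩ := ArcPath.of_transGen hu0
      obtain ⟨x, E, hE, hnd⟩ := simple_cycle m E0.length E0 u0 le_rfl hE0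
      obtain ⟨hEio, hEle1, hEnd⟩ := cycle_counts hE hnd
      have hEsub : ∀ p ∈ E, p ∈ m := hE.subset
      obtain ⟨l, hlE, hlm⟩ := List.Nodup.subperm hEnd hEsub
      obtain ⟨r, hr⟩ := hlm.exists_perm_append
      have hperm : m.Perm (E ++ r) := hr.trans ((hlE.append_right r))
      have hEne : E ≠ [] := hE.ne_nil
      have hrlen : r.length ≤ n := by
        have h1 := hperm.length_eq
        rw [List.length_append] at h1
        have h2 : 0 < E.length := List.length_pos_iff.mpr hEne
        omega
      have hout : ∀ v, outc m v = outc E v + outc r v := by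
        intro v; rw [outc, hperm.countP_eq, List.countP_append]; rfl
      have hin : ∀ v, inc m v = inc E v + inc r v := by
        intro v; rw [inc, hperm.countP_eq, List.countP_append]; rfl
      have hbal' : ∀ v, (fun v => Df v + outc E v) v + 2 * outc r v = D₀ v + inc r v := by
        intro v
        beta_reduce
        have hb := hbal v
        have h1 := hout v
        have h2 := hin v
        have h3 := hEio v
        omega
      have hradj : ∀ p ∈ r, G.Adj p.1 p.2 :=
        fun p hp => hadj p (hperm.mem_iff.mpr (List.mem_append_right E hp))
      obtain ⟨S', D', hval, hge, hacS⟩ := ih r hrlen hradj D₀ _ hbal'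
      exact ⟨S', D', hval, fun v => le_trans (Nat.le_add_right _ _) (hge v), hacS⟩
    · push_neg at hcyc
      obtain ⟨S', hval, hsub⟩ := order_lemma G m.length m rfl hadj hcyc D₀ Df hbal
      exact ⟨S', Df, hval, fun v => le_rfl,
        fun u h => hcyc u (Relation.TransGen.mono (fun a b hab => hsub (a, b) hab) _ _ h)⟩

end NoCycleAux

end NoCycleAuxSection

/-- No-Cycle Lemma: any sequence of pebbling moves can be replaced by one whose
transition multidigraph has no directed cycle, reaching at least as many pebbles
on every vertex. -/
theorem no_cycle_lemma (G : SimpleGraph V) (D₀ D : V → ℕ) (S : List (V × V))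
    (hS : ValidSeq G D₀ S D) :
    ∃ (S' : List (V × V)) (D' : V → ℕ), ValidSeq G D₀ S' D' ∧ (∀ v, D v ≤ D' v) ∧
      ∀ u, ¬ Relation.TransGen (fun a b => (a, b) ∈ S') u u := by
  obtain ⟨S', D', hval, hge, hac⟩ := NoCycleAux.decycle G S.length S le_rfl
    (NoCycleAux.validSeq_adj hS) D₀ D (NoCycleAux.validSeq_balance hS)
  exact ⟨S', D', hval, hge, hac⟩
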